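/- Let f : ℝ^n → ℝ be twice continuously differentiable in a neighborhood of x*, where ∇f(x*) = 0 and the Hessian ∇²f(x*) is positive definite. Let (B_k) be a sequence of invertible n × n real matrices with ‖B_k − ∇²f(x_k)‖ → 0 in operator norm, and let (x_k) be generated by x_{k+1} = x_k + p_k with p_k = −B_k⁻¹ ∇f(x_k), p_k ≠ 0 for all k, and suppose x_k → x*. Then (x_k) converges to x* superlinearly: ‖x_{k+1} − x*‖ / ‖x_k − x*‖ → 0. -/

import Mathlib

open Filter Topology
open scoped InnerProductSpace

set_option maxHeartbeats 1000000 in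
theorem superlinear_of_hessian_approx {n : ℕ} (f : EuclideanSpace ℝ (Fin n) → ℝ)
    (xs : EuclideanSpace ℝ (Fin n))
    (U : Set (EuclideanSpace ℝ (Fin n))) (hU : U ∈ 𝓝 xs)
    (hf : ContDiffOn ℝ 2 f U)
    (hgrad0 : gradient f xs = 0)
    (hHessPos : ∀ v : EuclideanSpace ℝ (Fin n), v ≠ 0 →
      0 < ⟪v, fderiv ℝ (gradient f) xs v⟫_ℝ)
    (B : ℕ → Matrix (Fin n) (Fin n) ℝ) (hBinv : ∀ k, IsUnit (B k))
    (x p : ℕ → EuclideanSpace ℝ (Fin n))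
    (hBconv : Tendsto
      (fun k => ‖Matrix.toEuclideanCLM (𝕜 := ℝ) (B k) - fderiv ℝ (gradient f) (x k)‖)
      atTop (𝓝 0))
    (hp : ∀ k, p k = -(Matrix.toEuclideanLin (B k)⁻¹ (gradient f (x k))))
    (hpne : ∀ k, p k ≠ 0)
    (hiter : ∀ k, x (k + 1) = x k + p k)
    (hconv : Tendsto x atTop (𝓝 xs)) :
    Tendsto (fun k => ‖x (k + 1) - xs‖ / ‖x k - xs‖) atTop (𝓝 0) := by
  classical
  obtain ⟨V, hVU, hVopen, hxsV⟩ := mem_nhds_iff.mp hU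
  set g := gradient f with hgdef
  have hgV : ContDiffOn ℝ 1 g V := by
    have h1 : ContDiffOn ℝ 1 (fderiv ℝ f) V :=
      (hf.mono hVU).fderiv_of_isOpen hVopen (by norm_num)
    exact (InnerProductSpace.toDual ℝ
      (EuclideanSpace ℝ (Fin n))).symm.toContinuousLinearEquiv.contDiff.comp_contDiffOn h1
  set H := fun z => fderiv ℝ g z with hHdef
  set Hc := H xs with hHc
  have hHcont : ContinuousOn H V := hgV.continuousOn_fderiv_of_isOpen hVopen le_rfl
  have hHxs : ContinuousAt H xs := hHcont.continuousAt (hVopen.mem_nhds hxsV)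
  have hgdiff : ∀ z ∈ V, HasFDerivAt g (H z) z := fun z hz =>
    ((hgV.differentiableOn one_ne_zero z hz).differentiableAt (hVopen.mem_nhds hz)).hasFDerivAt
  -- Hc is a unit
  have hHcUnit : IsUnit Hc := by
    apply ContinuousLinearMap.isUnit_iff_bijective.mpr
    have hinj : Function.Injective Hc := by
      rw [injective_iff_map_eq_zero]
      intro v hv
      by_contra hv0
      have := hHessPos v hv0
      rw [show fderiv ℝ (gradient f) xs v = Hc v from rfl, hv, inner_zero_right] at this
      exact lt_irrefl 0 this
    exact ⟨hinj, LinearMap.surjective_of_injective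
      (f := (Hc : EuclideanSpace ℝ (Fin n) →ₗ[ℝ] EuclideanSpace ℝ (Fin n))) hinj⟩
  set Bc := fun k => Matrix.toEuclideanCLM (𝕜 := ℝ) (B k) with hBcdef
  have hBcUnit : ∀ k, IsUnit (Bc k) := fun k => (hBinv k).map _
  -- B_k applied to p_k
  have hBcp : ∀ k, Bc k (p k) = -(g (x k)) := by
    intro k
    rw [hp k, map_neg, neg_inj]
    have h1 : (Matrix.toEuclideanLin (B k)⁻¹) (g (x k)) =
        Matrix.toEuclideanCLM (𝕜 := ℝ) ((B k)⁻¹) (g (x k)) := rfl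
    rw [h1, ← ContinuousLinearMap.mul_apply, ← map_mul,
      Matrix.mul_nonsing_inv _ ((Matrix.isUnit_iff_isUnit_det _).mp (hBinv k)), map_one,
      ContinuousLinearMap.one_apply]
  -- x k ≠ xs
  have hxk : ∀ k, x k ≠ xs := by
    intro k hk
    apply hpne k
    rw [hp k, hk, hgrad0, map_zero, neg_zero]
  have hek : ∀ k, (0:ℝ) < ‖x k - xs‖ := fun k => by
    rw [norm_pos_iff]; exact sub_ne_zero_of_ne (hxk k)
  -- convergence pieces
  have hHx : Tendsto (fun k => H (x k)) atTop (𝓝 Hc) := hHxs.tendsto.comp hconv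
  have hc2 : Tendsto (fun k => ‖H (x k) - Hc‖) atTop (𝓝 0) :=
    tendsto_iff_norm_sub_tendsto_zero.mp hHx
  have hc1 : Tendsto (fun k => ‖Bc k - H (x k)‖) atTop (𝓝 0) := hBconv
  have hBcconv : Tendsto Bc atTop (𝓝 Hc) := by
    rw [tendsto_iff_norm_sub_tendsto_zero]
    have hsum := hc1.add hc2
    rw [add_zero] at hsum
    apply squeeze_zero (fun k => norm_nonneg _) (fun k => ?_) hsum
    calc ‖Bc k - Hc‖ = ‖(Bc k - H (x k)) + (H (x k) - Hc)‖ := by abel_nf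
    _ ≤ ‖Bc k - H (x k)‖ + ‖H (x k) - Hc‖ := norm_add_le _ _
  have hinvconv : Tendsto (fun k => ‖Ring.inverse (Bc k)‖) atTop (𝓝 ‖Ring.inverse Hc‖) := by
    have := NormedRing.inverse_continuousAt hHcUnit.unit
    rw [hHcUnit.unit_spec] at this
    exact (continuous_norm.continuousAt.comp this).tendsto.comp hBcconv
  -- q k → 0
  set q := fun k => ‖g (x k) - Hc (x k - xs)‖ / ‖x k - xs‖ with hqdef
  have hq : Tendsto q atTop (𝓝 0) := by
    rw [NormedAddCommGroup.tendsto_nhds_zero]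
    intro ε hε
    have hev : ∀ᶠ z in 𝓝 xs, z ∈ V ∧ ‖H z - Hc‖ < ε/2 := by
      filter_upwards [hVopen.mem_nhds hxsV,
        hHxs (Metric.ball_mem_nhds Hc (by positivity : (0:ℝ) < ε/2))] with z h1 h2
      rw [Set.mem_preimage, Metric.mem_ball, dist_eq_norm] at h2
      exact ⟨h1, h2⟩
    obtain ⟨δ, hδpos, hball⟩ := Metric.eventually_nhds_iff_ball.mp hev
    filter_upwards [hconv (Metric.ball_mem_nhds xs hδpos)] with k hk
    have hmvt : ‖(g (x k) - Hc (x k)) - (g xs - Hc xs)‖ ≤ (ε/2) * ‖x k - xs‖ := by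
      apply (convex_ball xs δ).norm_image_sub_le_of_norm_hasFDerivWithin_le
        (f := fun z => g z - Hc z) (f' := fun z => H z - Hc)
        (fun z hz => ((hgdiff z (hball z hz).1).sub (Hc.hasFDerivAt)).hasFDerivWithinAt)
        (fun z hz => (hball z hz).2.le) (Metric.mem_ball_self hδpos) hk
    have h2 : g (x k) - Hc (x k - xs) = (g (x k) - Hc (x k)) - (g xs - Hc xs) := by
      rw [hgrad0, map_sub]; abel
    have hqle : q k ≤ ε/2 := by
      rw [hqdef]
      simp only [h2]
      rw [div_le_iff₀ (hek k)]
      exact hmvt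
    have : ‖q k‖ = q k := by
      rw [Real.norm_eq_abs, abs_of_nonneg]
      exact div_nonneg (norm_nonneg _) (norm_nonneg _)
    rw [this]
    exact lt_of_le_of_lt hqle (by linarith)
  -- main bound
  set s := fun k => ‖Ring.inverse (Bc k)‖ * (‖Bc k - H (x k)‖ + ‖H (x k) - Hc‖ + q k) with hsdef
  have hs : Tendsto s atTop (𝓝 0) := by
    have h := hinvconv.mul ((hc1.add hc2).add hq)
    rw [add_zero, add_zero, mul_zero] at h
    exact h
  apply squeeze_zero (fun k => div_nonneg (norm_nonneg _) (norm_nonneg _)) (fun k => ?_) hs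
  -- the pointwise bound
  have he' : x (k+1) - xs = (x k - xs) + p k := by rw [hiter k]; abel
  have hBce' : Bc k (x (k+1) - xs) = (Bc k - H (x k)) (x k - xs) + (H (x k) - Hc) (x k - xs)
      + (Hc (x k - xs) - g (x k)) := by
    rw [he', map_add, hBcp k]
    simp only [ContinuousLinearMap.sub_apply]
    abel
  have hnorm1 : ‖Bc k (x (k+1) - xs)‖ ≤ (‖Bc k - H (x k)‖ + ‖H (x k) - Hc‖ + q k) * ‖x k - xs‖ := by
    rw [hBce']
    calc ‖_ + _ + _‖ ≤ ‖(Bc k - H (x k)) (x k - xs)‖ + ‖(H (x k) - Hc) (x k - xs)‖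
          + ‖Hc (x k - xs) - g (x k)‖ := norm_add₃_le
    _ ≤ ‖Bc k - H (x k)‖ * ‖x k - xs‖ + ‖H (x k) - Hc‖ * ‖x k - xs‖ + q k * ‖x k - xs‖ := by
        gcongr
        · exact ContinuousLinearMap.le_opNorm _ _
        · exact ContinuousLinearMap.le_opNorm _ _
        · rw [hqdef, div_mul_cancel₀ _ (hek k).ne', norm_sub_rev]
    _ = _ := by ring
  have hid : x (k+1) - xs = Ring.inverse (Bc k) (Bc k (x (k+1) - xs)) := by
    rw [← ContinuousLinearMap.mul_apply, Ring.inverse_mul_cancel _ (hBcUnit k),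
      ContinuousLinearMap.one_apply]
  rw [div_le_iff₀ (hek k), hsdef]
  calc ‖x (k+1) - xs‖ = ‖Ring.inverse (Bc k) (Bc k (x (k+1) - xs))‖ := by rw [← hid]
  _ ≤ ‖Ring.inverse (Bc k)‖ * ‖Bc k (x (k+1) - xs)‖ := ContinuousLinearMap.le_opNorm _ _
  _ ≤ ‖Ring.inverse (Bc k)‖ * ((‖Bc k - H (x k)‖ + ‖H (x k) - Hc‖ + q k) * ‖x k - xs‖) := by
      gcongr
  _ = _ := by ring
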